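/- Let E/F be a quadratic extension of fields of characteristic zero, σ the nontrivial F-automorphism of E (acting entrywise on matrices over E), τ ∈ E× an element with σ(τ) = -τ, and ξ ∈ E× with ξ·σ(ξ) = 1. Let m ≥ 1. For Y ∈ M_m(F) with det(Y² - τ²·1) ≠ 0 (computed in M_m(E)), the matrix 1 - τ⁻¹Y is invertible and one sets κ(Y) = -ξ·(1 + τ⁻¹Y)·(1 - τ⁻¹Y)⁻¹ ∈ M_m(E). Then κ is a bijection from {Y ∈ M_m(F) : det(Y² - τ²·1) ≠ 0} onto {x ∈ GL_m(E) : x·σ(x) = 1 and det(x - ξ·1)·σ(det(x - ξ·1)) ≠ 0}, with inverse x ↦ τ·(x - ξ·1)⁻¹·(x + ξ·1), and it satisfies κ(g Y g⁻¹) = g·κ(Y)·g⁻¹ for every g ∈ GL_m(F). -/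

import Mathlib

section FixedField
variable {F E : Type*} [Field F] [Field E] [CharZero F] [CharZero E] [Algebra F E]

lemma fixed_in_base (hquad : Module.finrank F E = 2) (σ : E ≃ₐ[F] E)
    (τ : E) (hτ0 : τ ≠ 0) (hτσ : σ τ = -τ) (e : E) (he : σ e = e) :
    ∃ a : F, algebraMap F E a = e := by
  have li : LinearIndependent F ![(1 : E), τ] := by
    rw [LinearIndependent.pair_iff]
    intro s t hst
    have hst' : s • (1 : E) - t • τ = 0 := by
      have := congrArg σ hst
      simpa [map_add, Algebra.smul_def, hτσ, sub_eq_add_neg] using this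
    have hs : s • (1 : E) + s • (1 : E) = 0 := by
      have := congrArg₂ (· + ·) hst hst'
      simpa [add_add_sub_cancel] using this
    have hs0 : s = 0 := by
      have h1 : ((s + s : F) : F) • (1 : E) = 0 := by rw [add_smul]; exact hs
      have h2 : algebraMap F E (s + s) = 0 := by
        simpa [Algebra.smul_def] using h1
      have := (map_eq_zero (algebraMap F E)).mp h2
      exact add_self_eq_zero.mp this
    subst hs0
    refine ⟨rfl, ?_⟩
    have : t • τ = 0 := by simpa using hst
    rcases smul_eq_zero.mp this with h | h
    · exact h
    · exact absurd h hτ0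
  have hb : Fintype.card (Fin 2) = Module.finrank F E := by simp [hquad]
  have hspan : e ∈ Submodule.span F ({(1 : E), τ} : Set E) := by
    have h := (basisOfLinearIndependentOfCardEqFinrank li hb).span_eq
    rw [coe_basisOfLinearIndependentOfCardEqFinrank] at h
    have hrange : Set.range ![(1 : E), τ] = {(1 : E), τ} := by
      rw [show ({(1 : E), τ} : Set E) = {τ, 1} from Set.pair_comm _ _]
      simp [Matrix.range_cons, Matrix.range_empty]
    rw [hrange] at h
    rw [h]; trivial
  obtain ⟨a, b, hab⟩ := Submodule.mem_span_pair.mp hspan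
  have hb0 : b = 0 := by
    have h1 : σ e = a • (1 : E) - b • τ := by
      rw [← hab]; simp [map_add, Algebra.smul_def, hτσ, sub_eq_add_neg]
    have h2 : a • (1 : E) + b • τ = a • (1 : E) - b • τ := by
      rw [hab, ← he, h1]
    have h3 : b • τ + b • τ = 0 := by
      have := sub_eq_zero.mpr h2
      rw [add_sub_sub_cancel] at this
      linear_combination (norm := module) this
    have h4 : ((b + b : F)) • τ = 0 := by rw [add_smul]; exact h3
    rcases smul_eq_zero.mp h4 with h | h
    · exact add_self_eq_zero.mp h
    · exact absurd h hτ0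
  refine ⟨a, ?_⟩
  rw [← hab, hb0]
  simp [Algebra.smul_def]
end FixedField

namespace Stmt13Aux
variable {E : Type*} [Field E] {m : ℕ}

local notation "MatE" => Matrix (Fin m) (Fin m) E

lemma smul_mul_smul'' (c d : E) (M N : MatE) : (c • M) * (d • N) = (c * d) • (M * N) := by
  rw [Matrix.smul_mul, Matrix.mul_smul, smul_smul]

lemma factor (τ : E) (Z : MatE) :
    Z ^ 2 - τ ^ 2 • (1 : MatE) = (Z + τ • 1) * (Z - τ • 1) := by
  have h : (τ • (1 : MatE)) * (τ • 1) = τ ^ 2 • 1 := by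
    rw [smul_mul_smul'', one_mul, sq]
  rw [mul_sub, add_mul, add_mul, Matrix.smul_mul, Matrix.mul_smul, one_mul, mul_one, h, sq]
  abel

lemma comm_inv {P Q : MatE} (hP : IsUnit P.det) (h : Commute P Q) : Commute P⁻¹ Q := by
  calc P⁻¹ * Q = P⁻¹ * Q * (P * P⁻¹) := by rw [Matrix.mul_nonsing_inv P hP, mul_one]
    _ = P⁻¹ * (Q * P) * P⁻¹ := by simp only [mul_assoc]
    _ = P⁻¹ * (P * Q) * P⁻¹ := by rw [← h.eq]
    _ = (P⁻¹ * P) * (Q * P⁻¹) := by simp only [mul_assoc]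
    _ = Q * P⁻¹ := by rw [Matrix.nonsing_inv_mul P hP, one_mul]

lemma sub_smul_one_eq (τ : E) (hτ0 : τ ≠ 0) (Z : MatE) :
    1 - τ⁻¹ • Z = (-τ⁻¹) • (Z - τ • 1) := by
  rw [smul_sub, smul_smul, neg_mul, inv_mul_cancel₀ hτ0, neg_smul, neg_smul, one_smul,
    sub_neg_eq_add]
  abel

lemma add_smul_one_eq (τ : E) (hτ0 : τ ≠ 0) (Z : MatE) :
    1 + τ⁻¹ • Z = τ⁻¹ • (Z + τ • 1) := by
  rw [smul_add, smul_smul, inv_mul_cancel₀ hτ0, one_smul]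
  abel

lemma units_of (τ : E) (hτ0 : τ ≠ 0) (Z : MatE)
    (hdet : (Z ^ 2 - τ ^ 2 • (1 : MatE)).det ≠ 0) :
    IsUnit (1 - τ⁻¹ • Z).det ∧ IsUnit (1 + τ⁻¹ • Z).det := by
  rw [factor τ Z, Matrix.det_mul] at hdet
  have h1 : (Z + τ • 1).det ≠ 0 := left_ne_zero_of_mul hdet
  have h2 : (Z - τ • 1).det ≠ 0 := right_ne_zero_of_mul hdet
  constructor
  · rw [sub_smul_one_eq τ hτ0, Matrix.det_smul]
    exact isUnit_iff_ne_zero.mpr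
      (mul_ne_zero (pow_ne_zero _ (neg_ne_zero.mpr (inv_ne_zero hτ0))) h2)
  · rw [add_smul_one_eq τ hτ0, Matrix.det_smul]
    exact isUnit_iff_ne_zero.mpr (mul_ne_zero (pow_ne_zero _ (inv_ne_zero hτ0)) h1)

/-- The Cayley map on matrices over `E`. -/
noncomputable def kap (τ ξ : E) (Z : MatE) : MatE :=
  (-ξ) • ((1 + τ⁻¹ • Z) * (1 - τ⁻¹ • Z)⁻¹)

lemma commZB (τ : E) (Z : MatE) : Commute Z (1 - τ⁻¹ • Z) :=
  (Commute.one_right Z).sub_right ((Commute.refl Z).smul_right τ⁻¹)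

lemma det_inv_ne_zero (D : MatE) (hD : D.det ≠ 0) : D⁻¹.det ≠ 0 := by
  rw [Matrix.det_nonsing_inv, Ring.inverse_eq_inv']
  exact inv_ne_zero hD

lemma kap_isUnit (τ ξ : E) (hτ0 : τ ≠ 0) (hξ0 : ξ ≠ 0) (Z : MatE)
    (hdet : (Z ^ 2 - τ ^ 2 • (1 : MatE)).det ≠ 0) : IsUnit (kap τ ξ Z) := by
  obtain ⟨hB, hA⟩ := units_of τ hτ0 Z hdet
  rw [Matrix.isUnit_iff_isUnit_det, kap, Matrix.det_smul, Matrix.det_mul]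
  exact isUnit_iff_ne_zero.mpr (mul_ne_zero (pow_ne_zero _ (neg_ne_zero.mpr hξ0))
    (mul_ne_zero hA.ne_zero (det_inv_ne_zero _ hB.ne_zero)))

lemma kap_sub (τ ξ : E) (hτ0 : τ ≠ 0) (Z : MatE)
    (hdet : (Z ^ 2 - τ ^ 2 • (1 : MatE)).det ≠ 0) :
    kap τ ξ Z - ξ • 1 = (-(2 * ξ)) • (1 - τ⁻¹ • Z)⁻¹ := by
  obtain ⟨hB, hA⟩ := units_of τ hτ0 Z hdet
  have hBB := Matrix.mul_nonsing_inv _ hB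
  have hsum : (1 + τ⁻¹ • Z) + (1 - τ⁻¹ • Z) = (2 : E) • (1 : MatE) := by
    rw [two_smul]; abel
  simp only [kap]
  rw [show (ξ • (1 : MatE)) =
      -((-ξ) • ((1 - τ⁻¹ • Z) * (1 - τ⁻¹ • Z)⁻¹)) by rw [hBB]; simp]
  rw [sub_neg_eq_add, ← smul_add, ← add_mul, hsum, Matrix.smul_mul, one_mul, smul_smul]
  congr 1; ring

lemma kap_add (τ ξ : E) (hτ0 : τ ≠ 0) (Z : MatE)
    (hdet : (Z ^ 2 - τ ^ 2 • (1 : MatE)).det ≠ 0) :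
    kap τ ξ Z + ξ • 1 = (-(2 * ξ * τ⁻¹)) • (Z * (1 - τ⁻¹ • Z)⁻¹) := by
  obtain ⟨hB, hA⟩ := units_of τ hτ0 Z hdet
  have hBB := Matrix.mul_nonsing_inv _ hB
  have hdiff : (1 + τ⁻¹ • Z) - (1 - τ⁻¹ • Z) = (2 * τ⁻¹) • Z := by
    rw [two_mul, add_smul]; abel
  simp only [kap]
  rw [show (ξ • (1 : MatE)) =
      -((-ξ) • ((1 - τ⁻¹ • Z) * (1 - τ⁻¹ • Z)⁻¹)) by rw [hBB]; simp]
  rw [← sub_eq_add_neg, ← smul_sub, ← sub_mul, hdiff, Matrix.smul_mul, smul_smul]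
  congr 1; ring

lemma kap_inv_formula (τ ξ : E) (hτ0 : τ ≠ 0) (hξ0 : ξ ≠ 0) (h2 : (2 : E) ≠ 0)
    (Z : MatE) (hdet : (Z ^ 2 - τ ^ 2 • (1 : MatE)).det ≠ 0) :
    τ • ((kap τ ξ Z - ξ • 1)⁻¹ * (kap τ ξ Z + ξ • 1)) = Z := by
  obtain ⟨hB, hA⟩ := units_of τ hτ0 Z hdet
  have hc0 : (-(2 * ξ) : E) ≠ 0 := neg_ne_zero.mpr (mul_ne_zero h2 hξ0)
  have hBB := Matrix.mul_nonsing_inv _ hB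
  have hB'B := Matrix.nonsing_inv_mul _ hB
  have hinv : (kap τ ξ Z - ξ • 1)⁻¹ = (-(2 * ξ))⁻¹ • (1 - τ⁻¹ • Z) := by
    refine Matrix.inv_eq_right_inv ?_
    rw [kap_sub τ ξ hτ0 Z hdet, smul_mul_smul'', hB'B, mul_inv_cancel₀ hc0, one_smul]
  rw [hinv, kap_add τ ξ hτ0 Z hdet, smul_mul_smul'']
  have hmat : (1 - τ⁻¹ • Z) * (Z * (1 - τ⁻¹ • Z)⁻¹) = Z := by
    rw [← mul_assoc, ← (commZB τ Z).eq, mul_assoc, hBB, mul_one]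
  rw [hmat, smul_smul]
  have h1 : τ * ((-(2 * ξ))⁻¹ * -(2 * ξ * τ⁻¹)) = 1 := by field_simp
  rw [h1, one_smul]

lemma surj_matrix (τ ξ : E) (hτ0 : τ ≠ 0) (hξ0 : ξ ≠ 0) (h2 : (2 : E) ≠ 0)
    (x : MatE) (hx : x.det ≠ 0) (hD : (x - ξ • 1).det ≠ 0) :
    (((τ • ((x - ξ • 1)⁻¹ * (x + ξ • 1))) ^ 2 - τ ^ 2 • (1 : MatE)).det ≠ 0) ∧
    kap τ ξ (τ • ((x - ξ • 1)⁻¹ * (x + ξ • 1))) = x := by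
  set D : MatE := x - ξ • 1 with hDdef
  set C : MatE := x + ξ • 1 with hCdef
  set Z : MatE := τ • (D⁻¹ * C) with hZdef
  have hDu : IsUnit D.det := isUnit_iff_ne_zero.mpr hD
  have hDD := Matrix.mul_nonsing_inv _ hDu
  have hD'D := Matrix.nonsing_inv_mul _ hDu
  have hDx : Commute D x := (Commute.refl x).sub_left ((Commute.one_left x).smul_left ξ)
  have hτZ : τ⁻¹ • Z = D⁻¹ * C := by
    rw [hZdef, smul_smul, inv_mul_cancel₀ hτ0, one_smul]
  have hsum : D + C = (2 : E) • x := by rw [hDdef, hCdef, two_smul]; abel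
  have hdiff : D - C = (-(2 * ξ)) • (1 : MatE) := by
    rw [hDdef, hCdef, two_mul, neg_smul, add_smul]
    abel
  have hdiff' : C - D = (2 * ξ) • (1 : MatE) := by
    rw [← neg_sub, hdiff, neg_smul, neg_neg]
  have hA' : 1 + τ⁻¹ • Z = (2 : E) • (D⁻¹ * x) := by
    rw [hτZ, ← hD'D, ← mul_add, hsum, Matrix.mul_smul]
  have hB' : 1 - τ⁻¹ • Z = (-(2 * ξ)) • D⁻¹ := by
    rw [hτZ, ← hD'D, ← mul_sub, hdiff, Matrix.mul_smul, mul_one]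
  have hc0 : (-(2 * ξ) : E) ≠ 0 := neg_ne_zero.mpr (mul_ne_zero h2 hξ0)
  have hBinv : (1 - τ⁻¹ • Z)⁻¹ = (-(2 * ξ))⁻¹ • D := by
    refine Matrix.inv_eq_right_inv ?_
    rw [hB', smul_mul_smul'', hD'D, mul_inv_cancel₀ hc0, one_smul]
  constructor
  · rw [factor τ Z, Matrix.det_mul]
    have hZp : Z + τ • 1 = (2 * τ) • (D⁻¹ * x) := by
      rw [hZdef, show (τ • (1 : MatE)) = τ • (D⁻¹ * D) by rw [hD'D],
        ← smul_add, ← mul_add, show C + D = (2 : E) • x by rw [← hsum]; abel,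
        Matrix.mul_smul, smul_smul, mul_comm τ 2]
    have hZm : Z - τ • 1 = (τ * (2 * ξ)) • D⁻¹ := by
      rw [hZdef, show (τ • (1 : MatE)) = τ • (D⁻¹ * D) by rw [hD'D],
        ← smul_sub, ← mul_sub, hdiff', Matrix.mul_smul, mul_one, smul_smul]
    rw [hZp, hZm, Matrix.det_smul, Matrix.det_smul, Matrix.det_mul]
    have hDi : D⁻¹.det ≠ 0 := det_inv_ne_zero _ hD
    exact mul_ne_zero (mul_ne_zero (pow_ne_zero _ (mul_ne_zero h2 hτ0))
      (mul_ne_zero hDi hx)) (mul_ne_zero (pow_ne_zero _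
      (mul_ne_zero hτ0 (mul_ne_zero h2 hξ0))) hDi)
  · rw [kap, hA', hBinv, smul_mul_smul'']
    have hmat : D⁻¹ * x * D = x := by
      rw [mul_assoc, ← hDx.eq, ← mul_assoc, hD'D, one_mul]
    rw [smul_smul, hmat]
    have h1 : -ξ * (2 * (-(2 * ξ))⁻¹) = 1 := by
      field_simp
    rw [h1, one_smul]

lemma kap_conj (τ ξ : E) (hτ0 : τ ≠ 0) (Z G G' : MatE) (hGG' : G * G' = 1)
    (hG'G : G' * G = 1) (hdet : (Z ^ 2 - τ ^ 2 • (1 : MatE)).det ≠ 0) :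
    kap τ ξ (G * Z * G') = G * kap τ ξ Z * G' := by
  obtain ⟨hB, hA⟩ := units_of τ hτ0 Z hdet
  have hBB := Matrix.mul_nonsing_inv _ hB
  have hA' : 1 + τ⁻¹ • (G * Z * G') = G * (1 + τ⁻¹ • Z) * G' := by
    rw [mul_add, add_mul, mul_one, hGG', Matrix.mul_smul, Matrix.smul_mul]
  have hB' : 1 - τ⁻¹ • (G * Z * G') = G * (1 - τ⁻¹ • Z) * G' := by
    rw [mul_sub, sub_mul, mul_one, hGG', Matrix.mul_smul, Matrix.smul_mul]
  have hBinv : (G * (1 - τ⁻¹ • Z) * G')⁻¹ = G * (1 - τ⁻¹ • Z)⁻¹ * G' := by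
    refine Matrix.inv_eq_right_inv ?_
    calc G * (1 - τ⁻¹ • Z) * G' * (G * (1 - τ⁻¹ • Z)⁻¹ * G')
        = G * ((1 - τ⁻¹ • Z) * ((G' * G) * (1 - τ⁻¹ • Z)⁻¹)) * G' := by
          simp only [mul_assoc]
      _ = G * ((1 - τ⁻¹ • Z) * (1 - τ⁻¹ • Z)⁻¹) * G' := by rw [hG'G, one_mul]
      _ = 1 := by rw [hBB, mul_one, hGG']
  rw [kap, kap, hA', hB', hBinv, Matrix.mul_smul, Matrix.smul_mul]
  congr 1
  calc G * (1 + τ⁻¹ • Z) * G' * (G * (1 - τ⁻¹ • Z)⁻¹ * G')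
      = G * ((1 + τ⁻¹ • Z) * ((G' * G) * (1 - τ⁻¹ • Z)⁻¹)) * G' := by
        simp only [mul_assoc]
    _ = G * ((1 + τ⁻¹ • Z) * (1 - τ⁻¹ • Z)⁻¹) * G' := by rw [hG'G, one_mul]

end Stmt13Aux



/-- The Cayley map `κ(Y) = -ξ (1 + τ⁻¹ Y)(1 - τ⁻¹ Y)⁻¹`, from `m × m` matrices over `F`
to `m × m` matrices over `E`. -/
noncomputable def cayley (F E : Type*) [Field F] [Field E] [Algebra F E]
    (τ ξ : E) (m : ℕ) (Y : Matrix (Fin m) (Fin m) F) : Matrix (Fin m) (Fin m) E :=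
  (-ξ) • ((1 + τ⁻¹ • Y.map (algebraMap F E)) * (1 - τ⁻¹ • Y.map (algebraMap F E))⁻¹)

/-- For `τ ∈ E×` with `σ τ = -τ` and `ξ ∈ E×` with `ξ σ(ξ) = 1`, the
Cayley map `κ` is a `GL_m(F)`-equivariant bijection from
`{Y ∈ M_m(F) : det (Y² - τ²) ≠ 0}` onto
`{x ∈ GL_m(E) : x σ(x) = 1, det(x - ξ) σ(det(x - ξ)) ≠ 0}`, the matrix `1 - τ⁻¹ Y`
being invertible on this locus, with inverse `x ↦ τ (x - ξ)⁻¹ (x + ξ)`. -/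
theorem stmt_13 (F E : Type*) [Field F] [Field E] [CharZero F] [CharZero E] [Algebra F E]
    (hquad : Module.finrank F E = 2)
    (σ : E ≃ₐ[F] E) (hσ : σ ≠ AlgEquiv.refl)
    (τ : E) (hτ0 : τ ≠ 0) (hτσ : σ τ = -τ)
    (ξ : E) (hξ : ξ * σ ξ = 1)
    (m : ℕ) (hm : 1 ≤ m) :
    -- the matrix `1 - τ⁻¹ Y` is invertible on the domain
    (∀ Y : Matrix (Fin m) (Fin m) F,
        ((Y.map (algebraMap F E)) ^ 2 - τ ^ 2 • (1 : Matrix (Fin m) (Fin m) E)).det ≠ 0 →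
        IsUnit (1 - τ⁻¹ • Y.map (algebraMap F E))) ∧
    -- `κ` is a bijection between the two loci
    Set.BijOn (cayley F E τ ξ m)
      {Y : Matrix (Fin m) (Fin m) F |
        ((Y.map (algebraMap F E)) ^ 2 - τ ^ 2 • (1 : Matrix (Fin m) (Fin m) E)).det ≠ 0}
      {x : Matrix (Fin m) (Fin m) E | IsUnit x ∧ x * x.map ⇑σ = 1 ∧
        (x - ξ • 1).det * σ ((x - ξ • 1).det) ≠ 0} ∧
    -- the inverse of `κ` is `x ↦ τ (x - ξ)⁻¹ (x + ξ)`
    (∀ Y : Matrix (Fin m) (Fin m) F,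
        ((Y.map (algebraMap F E)) ^ 2 - τ ^ 2 • (1 : Matrix (Fin m) (Fin m) E)).det ≠ 0 →
        τ • ((cayley F E τ ξ m Y - ξ • 1)⁻¹ * (cayley F E τ ξ m Y + ξ • 1)) =
          Y.map (algebraMap F E)) ∧
    -- `GL_m(F)`-equivariance
    (∀ (g : (Matrix (Fin m) (Fin m) F)ˣ) (Y : Matrix (Fin m) (Fin m) F),
        ((Y.map (algebraMap F E)) ^ 2 - τ ^ 2 • (1 : Matrix (Fin m) (Fin m) E)).det ≠ 0 →
        cayley F E τ ξ m ((↑g : Matrix (Fin m) (Fin m) F) * Y * (↑g⁻¹ : Matrix (Fin m) (Fin m) F)) =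
          ((g : Matrix (Fin m) (Fin m) F).map (algebraMap F E)) * cayley F E τ ξ m Y *
            ((↑g⁻¹ : Matrix (Fin m) (Fin m) F).map (algebraMap F E))) := by
  classical
  have h2 : (2 : E) ≠ 0 := two_ne_zero
  have hξ0 : ξ ≠ 0 := left_ne_zero_of_mul_eq_one hξ
  have hσξ : σ ξ = ξ⁻¹ := eq_inv_of_mul_eq_one_left (by rw [mul_comm]; exact hξ)
  have hστ : σ τ⁻¹ = -τ⁻¹ := by rw [map_inv₀, hτσ, inv_neg]
  have hσne : ∀ d : E, d ≠ 0 → σ d ≠ 0 := fun d hd h0 =>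
    hd (σ.injective (by rw [h0, map_zero]))
  -- matrix map lemmas for σ
  have hmapmul : ∀ M N : Matrix (Fin m) (Fin m) E,
      (M * N).map ⇑σ = M.map ⇑σ * N.map ⇑σ := by
    intro M N; ext i j
    simp [Matrix.map_apply, Matrix.mul_apply, map_sum, map_mul]
  have hmapone : (1 : Matrix (Fin m) (Fin m) E).map ⇑σ = 1 :=
    Matrix.map_one _ (map_zero σ) (map_one σ)
  have hmapadd : ∀ M N : Matrix (Fin m) (Fin m) E,
      (M + N).map ⇑σ = M.map ⇑σ + N.map ⇑σ := by
    intro M N; ext i j; simp [Matrix.map_apply]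
  have hmapsub : ∀ M N : Matrix (Fin m) (Fin m) E,
      (M - N).map ⇑σ = M.map ⇑σ - N.map ⇑σ := by
    intro M N; ext i j; simp [Matrix.map_apply]
  have hmapsmul : ∀ (c : E) (M : Matrix (Fin m) (Fin m) E),
      (c • M).map ⇑σ = σ c • M.map ⇑σ := by
    intro c M; ext i j; simp [Matrix.map_apply, Matrix.smul_apply, smul_eq_mul, map_mul]
  have hmapinv : ∀ M : Matrix (Fin m) (Fin m) E, IsUnit M.det →
      (M⁻¹).map ⇑σ = (M.map ⇑σ)⁻¹ := by
    intro M hM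
    refine (Matrix.inv_eq_right_inv ?_).symm
    rw [← hmapmul, Matrix.mul_nonsing_inv _ hM, hmapone]
  have hfix : ∀ Y : Matrix (Fin m) (Fin m) F,
      (Y.map (algebraMap F E)).map ⇑σ = Y.map (algebraMap F E) := by
    intro Y; ext i j; simp [Matrix.map_apply]
  have hcay : ∀ Y, cayley F E τ ξ m Y = Stmt13Aux.kap τ ξ (Y.map (algebraMap F E)) :=
    fun _ => rfl
  -- part 1
  have part1 : ∀ Y : Matrix (Fin m) (Fin m) F,
      ((Y.map (algebraMap F E)) ^ 2 - τ ^ 2 • (1 : Matrix (Fin m) (Fin m) E)).det ≠ 0 →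
      IsUnit (1 - τ⁻¹ • Y.map (algebraMap F E)) := fun Y h =>
    (Matrix.isUnit_iff_isUnit_det _).mpr (Stmt13Aux.units_of τ hτ0 _ h).1
  -- σ-unitarity of kap
  have hsig : ∀ Z : Matrix (Fin m) (Fin m) E,
      (Z ^ 2 - τ ^ 2 • (1 : Matrix (Fin m) (Fin m) E)).det ≠ 0 → Z.map ⇑σ = Z →
      Stmt13Aux.kap τ ξ Z * (Stmt13Aux.kap τ ξ Z).map ⇑σ = 1 := by
    intro Z hdet hZ
    obtain ⟨hB, hA⟩ := Stmt13Aux.units_of τ hτ0 Z hdet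
    have hAm : (1 + τ⁻¹ • Z).map ⇑σ = 1 - τ⁻¹ • Z := by
      rw [hmapadd, hmapone, hmapsmul, hστ, hZ, neg_smul, ← sub_eq_add_neg]
    have hBm : (1 - τ⁻¹ • Z).map ⇑σ = 1 + τ⁻¹ • Z := by
      rw [hmapsub, hmapone, hmapsmul, hστ, hZ, neg_smul, sub_neg_eq_add]
    rw [Stmt13Aux.kap, hmapsmul, hmapmul, hmapinv _ hB, hAm, hBm,
      Stmt13Aux.smul_mul_smul'']
    have hmat : (1 + τ⁻¹ • Z) * (1 - τ⁻¹ • Z)⁻¹ * ((1 - τ⁻¹ • Z) * (1 + τ⁻¹ • Z)⁻¹) = 1 := by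
      rw [mul_assoc, ← mul_assoc (1 - τ⁻¹ • Z)⁻¹, Matrix.nonsing_inv_mul _ hB, one_mul,
        Matrix.mul_nonsing_inv _ hA]
    rw [hmat]
    have hsc : -ξ * σ (-ξ) = 1 := by
      rw [map_neg, hσξ, neg_mul_neg, mul_inv_cancel₀ hξ0]
    rw [hsc, one_smul]
  -- det of kap - ξ•1 is nonzero
  have hdetsub : ∀ Z : Matrix (Fin m) (Fin m) E,
      (Z ^ 2 - τ ^ 2 • (1 : Matrix (Fin m) (Fin m) E)).det ≠ 0 →
      (Stmt13Aux.kap τ ξ Z - ξ • 1).det ≠ 0 := by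
    intro Z hdet
    obtain ⟨hB, hA⟩ := Stmt13Aux.units_of τ hτ0 Z hdet
    rw [Stmt13Aux.kap_sub τ ξ hτ0 Z hdet, Matrix.det_smul]
    exact mul_ne_zero (pow_ne_zero _ (neg_ne_zero.mpr (mul_ne_zero h2 hξ0)))
      (Stmt13Aux.det_inv_ne_zero _ hB.ne_zero)
  -- part 3 (inverse formula)
  have part3 : ∀ Y : Matrix (Fin m) (Fin m) F,
      ((Y.map (algebraMap F E)) ^ 2 - τ ^ 2 • (1 : Matrix (Fin m) (Fin m) E)).det ≠ 0 →
      τ • ((cayley F E τ ξ m Y - ξ • 1)⁻¹ * (cayley F E τ ξ m Y + ξ • 1)) =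
        Y.map (algebraMap F E) := by
    intro Y h
    rw [hcay]
    exact Stmt13Aux.kap_inv_formula τ ξ hτ0 hξ0 h2 _ h
  refine ⟨part1, ⟨?_, ?_, ?_⟩, part3, ?_⟩
  · -- MapsTo
    intro Y hY
    simp only [Set.mem_setOf_eq] at hY ⊢
    rw [hcay]
    refine ⟨Stmt13Aux.kap_isUnit τ ξ hτ0 hξ0 _ hY, hsig _ hY (hfix Y), ?_⟩
    exact mul_ne_zero (hdetsub _ hY) (hσne _ (hdetsub _ hY))
  · -- InjOn
    intro Y1 h1 Y2 hh2 heq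
    simp only [Set.mem_setOf_eq] at h1 hh2
    have e1 := part3 Y1 h1
    rw [heq] at e1
    have e2 := e1.symm.trans (part3 Y2 hh2)
    ext i j
    have hij : (Y1.map (algebraMap F E)) i j = (Y2.map (algebraMap F E)) i j := by rw [e2]
    simpa [Matrix.map_apply] using (algebraMap F E).injective hij
  · -- SurjOn
    intro x hx
    simp only [Set.mem_setOf_eq] at hx
    obtain ⟨hxu, hx1, hxdet⟩ := hx
    have hxd : x.det ≠ 0 := ((Matrix.isUnit_iff_isUnit_det x).mp hxu).ne_zero
    have hD : (x - ξ • 1).det ≠ 0 := left_ne_zero_of_mul hxdet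
    have hDu : IsUnit (x - ξ • 1).det := isUnit_iff_ne_zero.mpr hD
    have hxx' : x * x⁻¹ = 1 := Matrix.mul_nonsing_inv x (isUnit_iff_ne_zero.mpr hxd)
    have hx'x : x⁻¹ * x = 1 := Matrix.nonsing_inv_mul x (isUnit_iff_ne_zero.mpr hxd)
    have hDD : (x - ξ • 1) * (x - ξ • 1)⁻¹ = 1 := Matrix.mul_nonsing_inv _ hDu
    have hxσ : x.map ⇑σ = x⁻¹ := (Matrix.inv_eq_right_inv hx1).symm
    obtain ⟨hZdet, hZkap⟩ := Stmt13Aux.surj_matrix τ ξ hτ0 hξ0 h2 x hxd hD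
    set Z : Matrix (Fin m) (Fin m) E := τ • ((x - ξ • 1)⁻¹ * (x + ξ • 1)) with hZdef
    -- Z is fixed by σ
    have hDm : (x - ξ • 1).map ⇑σ = (-ξ⁻¹) • (x⁻¹ * (x - ξ • 1)) := by
      rw [hmapsub, hmapsmul, hmapone, hσξ, hxσ, mul_sub, hx'x, Matrix.mul_smul, mul_one,
        smul_sub, smul_smul]
      have hc : (-ξ⁻¹ : E) * ξ = -1 := by field_simp
      rw [hc]
      module
    have hCm : (x + ξ • 1).map ⇑σ = ξ⁻¹ • (x⁻¹ * (x + ξ • 1)) := by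
      rw [hmapadd, hmapsmul, hmapone, hσξ, hxσ, mul_add, hx'x, Matrix.mul_smul, mul_one,
        smul_add, smul_smul, inv_mul_cancel₀ hξ0, one_smul]
      abel
    have hDmInv : ((x - ξ • 1).map ⇑σ)⁻¹ = (-ξ) • ((x - ξ • 1)⁻¹ * x) := by
      refine Matrix.inv_eq_right_inv ?_
      rw [hDm, Stmt13Aux.smul_mul_smul'']
      have hmat : x⁻¹ * (x - ξ • 1) * ((x - ξ • 1)⁻¹ * x) = 1 := by
        rw [mul_assoc, ← mul_assoc (x - ξ • 1), hDD, one_mul, hx'x]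
      rw [hmat]
      have hc : (-ξ⁻¹ : E) * -ξ = 1 := by field_simp
      rw [hc, one_smul]
    have hZfix : Z.map ⇑σ = Z := by
      rw [hZdef, hmapsmul, hmapmul, hmapinv _ hDu, hDmInv, hCm, hτσ,
        Stmt13Aux.smul_mul_smul'']
      have hmat : (x - ξ • 1)⁻¹ * x * (x⁻¹ * (x + ξ • 1)) =
          (x - ξ • 1)⁻¹ * (x + ξ • 1) := by
        rw [mul_assoc, ← mul_assoc x x⁻¹, hxx', one_mul]
      rw [hmat, smul_smul]
      have hc : -τ * (-ξ * ξ⁻¹) = τ := by field_simp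
      rw [hc]
    -- descend Z to a matrix over F
    have hentry : ∀ i j, ∃ a : F, algebraMap F E a = Z i j := by
      intro i j
      refine fixed_in_base hquad σ τ hτ0 hτσ (Z i j) ?_
      have := congrFun (congrFun hZfix i) j
      simpa [Matrix.map_apply] using this
    refine ⟨Matrix.of (fun i j => Classical.choose (hentry i j)), ?_, ?_⟩
    · have hW : (Matrix.of (fun i j => Classical.choose (hentry i j))).map
          (algebraMap F E) = Z := by
        ext i j
        exact Classical.choose_spec (hentry i j)
      simp only [Set.mem_setOf_eq]
      rw [hW]
      exact hZdet
    · have hW : (Matrix.of (fun i j => Classical.choose (hentry i j))).map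
          (algebraMap F E) = Z := by
        ext i j
        exact Classical.choose_spec (hentry i j)
      rw [hcay, hW, hZdef]
      exact hZkap
  · -- equivariance
    intro g Y hY
    have hGG' : ((g : Matrix (Fin m) (Fin m) F).map (algebraMap F E)) *
        ((↑g⁻¹ : Matrix (Fin m) (Fin m) F).map (algebraMap F E)) = 1 := by
      rw [← Matrix.map_mul, Units.mul_inv, Matrix.map_one _ (map_zero _) (map_one _)]
    have hG'G : ((↑g⁻¹ : Matrix (Fin m) (Fin m) F).map (algebraMap F E)) *
        ((g : Matrix (Fin m) (Fin m) F).map (algebraMap F E)) = 1 := by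
      rw [← Matrix.map_mul, Units.inv_mul, Matrix.map_one _ (map_zero _) (map_one _)]
    have hmapY : (((g : Matrix (Fin m) (Fin m) F) * Y *
        (↑g⁻¹ : Matrix (Fin m) (Fin m) F))).map (algebraMap F E) =
        ((g : Matrix (Fin m) (Fin m) F).map (algebraMap F E)) * Y.map (algebraMap F E) *
          ((↑g⁻¹ : Matrix (Fin m) (Fin m) F).map (algebraMap F E)) := by
      rw [Matrix.map_mul, Matrix.map_mul]
    rw [hcay, hcay, hmapY]
    exact Stmt13Aux.kap_conj τ ξ hτ0 _ _ _ hGG' hG'G hY
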